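/- Let ABCD be a convex quadrilateral in the plane in which no three vertices are collinear, and suppose D lies strictly outside the circumcircle of triangle ABC (so that diagonal AC gives the Delaunay triangulation of the quadrilateral, up to relabeling). Denote by R_{XYZ} the circumradius of triangle XYZ. Then max(R_{ABD}, R_{BCD}) may exceed some of R_{ABC}, R_{ACD}, but in all cases min over the Delaunay pair is smaller: specifically, min(R_{ABC}, R_{ACD}) ≤ min(R_{ABD}, R_{BCD}) and max(R_{ABC}, R_{ACD}) ≤ max(R_{ABD}, R_{BCD}). -/

import Mathlib

/-- Counterclockwise orientation predicate for three planar points. -/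
def ccw (A B C : EuclideanSpace ℝ (Fin 2)) : Prop :=
  0 < (B 0 - A 0) * (C 1 - A 1) - (B 1 - A 1) * (C 0 - A 0)

/-- The circumradius of the triangle `XYZ`. -/
noncomputable def circumRad {A B C : EuclideanSpace ℝ (Fin 2)}
    (h : AffineIndependent ℝ ![A, B, C]) : ℝ :=
  (⟨![A, B, C], h⟩ : Affine.Simplex ℝ (EuclideanSpace ℝ (Fin 2)) 2).circumradius

/-- The circumcenter of the triangle `XYZ`. -/
noncomputable def circumCtr {A B C : EuclideanSpace ℝ (Fin 2)}
    (h : AffineIndependent ℝ ![A, B, C]) : EuclideanSpace ℝ (Fin 2) :=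
  (⟨![A, B, C], h⟩ : Affine.Simplex ℝ (EuclideanSpace ℝ (Fin 2)) 2).circumcenter

namespace DelaunayAux

open EuclideanGeometry Real RealInnerProductSpace

noncomputable section

abbrev E2 := EuclideanSpace ℝ (Fin 2)

instance : Fact (Module.finrank ℝ E2 = 2) := ⟨finrank_euclideanSpace_fin⟩

instance : Module.Oriented ℝ E2 (Fin 2) :=
  ⟨(EuclideanSpace.basisFun (Fin 2) ℝ).toBasis.orientation⟩

local notation "o" => (Module.Oriented.positiveOrientation : Orientation ℝ E2 (Fin 2))

/-- Cross product (twice signed area) at vertex `P`. -/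
def cr (P Q S : E2) : ℝ := (Q 0 - P 0) * (S 1 - P 1) - (Q 1 - P 1) * (S 0 - P 0)

/-- Dot product at vertex `P`. -/
def dp (P Q S : E2) : ℝ := (Q 0 - P 0) * (S 0 - P 0) + (Q 1 - P 1) * (S 1 - P 1)

lemma inner_coords (x y : E2) : ⟪x, y⟫ = x 0 * y 0 + x 1 * y 1 := by
  simp [PiLp.inner_apply, Fin.sum_univ_two, RCLike.inner_apply]
  ring

lemma dist_sq (x y : E2) : dist x y ^ 2 = (x 0 - y 0) ^ 2 + (x 1 - y 1) ^ 2 := by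
  rw [EuclideanSpace.dist_eq, Real.sq_sqrt (by positivity)]
  simp [Fin.sum_univ_two, Real.dist_eq, sq_abs]

lemma areaForm_coords (x y : E2) : o.areaForm x y = x 0 * y 1 - x 1 * y 0 := by
  rw [Orientation.areaForm_to_volumeForm,
    Orientation.volumeForm_robust o (EuclideanSpace.basisFun (Fin 2) ℝ) rfl,
    Module.Basis.det_apply, Matrix.det_fin_two]
  simp [Module.Basis.toMatrix_apply]
  ring

lemma sign_oangle_of_pos {x y : E2} (h : 0 < x 0 * y 1 - x 1 * y 0) :
    (o.oangle x y).sign = 1 := by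
  have hx : x ≠ 0 := by rintro rfl; simp at h
  have hy : y ≠ 0 := by rintro rfl; simp at h
  have hk : o.kahler x y ≠ 0 := o.kahler_ne_zero hx hy
  have him : (o.kahler x y).im = x 0 * y 1 - x 1 * y 0 := by
    rw [Orientation.kahler_apply_apply]
    simp [areaForm_coords]
  have habs : 0 < ‖o.kahler x y‖ := norm_pos_iff.mpr hk
  have hsign : (o.oangle x y).sign
      = SignType.sign (Real.sin (Complex.arg (o.kahler x y))) := by
    rw [Orientation.oangle, Real.Angle.sign, Real.Angle.sin_coe]
  rw [hsign, Complex.sin_arg, him]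
  exact sign_pos (div_pos h habs)

lemma oangle_sign_pos {P Q S : E2} (h : 0 < cr P Q S) : (∡ Q P S).sign = 1 := by
  have : ∡ Q P S = o.oangle (Q - P) (S - P) := rfl
  rw [this]
  exact sign_oangle_of_pos h

lemma ne₁ {P Q S : E2} (h : 0 < cr P Q S) : Q ≠ P := by
  intro hq
  rw [show cr P Q S = 0 by rw [hq]; unfold cr; ring] at h
  exact lt_irrefl 0 h

lemma ne₂ {P Q S : E2} (h : 0 < cr P Q S) : S ≠ P := by
  intro hq
  rw [show cr P Q S = 0 by rw [hq]; unfold cr; ring] at h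
  exact lt_irrefl 0 h

lemma ne₃ {P Q S : E2} (h : 0 < cr P Q S) : Q ≠ S := by
  intro hq
  rw [show cr P Q S = 0 by rw [hq]; unfold cr; ring] at h
  exact lt_irrefl 0 h

lemma sin_angle_pos {P Q S : E2} (h : 0 < cr P Q S) : 0 < Real.sin (∠ Q P S) := by
  have hs := oangle_sign_pos h
  have he : ∡ Q P S = (∠ Q P S : Real.Angle) := oangle_eq_angle_of_sign_eq_one hs
  have : (0 : ℝ) < (∡ Q P S).sin := by
    rw [Real.Angle.sign] at hs
    exact (sign_eq_one_iff).mp hs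
  rwa [he, Real.Angle.sin_coe] at this

lemma angle_pos_lt_pi {a : ℝ} (h0 : 0 ≤ a) (h1 : a ≤ π) (hs : 0 < Real.sin a) :
    0 < a ∧ a < π := by
  constructor
  · rcases h0.lt_or_eq with h | h
    · exact h
    · exfalso; rw [← h, Real.sin_zero] at hs; exact lt_irrefl 0 hs
  · rcases h1.lt_or_eq with h | h
    · exact h
    · exfalso; rw [h, Real.sin_pi] at hs; exact lt_irrefl 0 hs

lemma angle_add {P p1 p2 p3 : E2} (h1 : 0 < cr P p1 p2) (h2 : 0 < cr P p2 p3)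
    (h3 : 0 < cr P p1 p3) : ∠ p1 P p2 + ∠ p2 P p3 = ∠ p1 P p3 := by
  have o1 := oangle_sign_pos h1
  have o2 := oangle_sign_pos h2
  have o3 := oangle_sign_pos h3
  have hadd := EuclideanGeometry.oangle_add (ne₁ h1) (ne₂ h1) (ne₂ h3)
  rw [oangle_eq_angle_of_sign_eq_one o1, oangle_eq_angle_of_sign_eq_one o2,
    oangle_eq_angle_of_sign_eq_one o3, ← Real.Angle.coe_add] at hadd
  obtain ⟨k, hk⟩ := Real.Angle.angle_eq_iff_two_pi_dvd_sub.mp hadd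
  have b1 := angle_pos_lt_pi (angle_nonneg p1 P p2) (angle_le_pi p1 P p2) (sin_angle_pos h1)
  have b2 := angle_pos_lt_pi (angle_nonneg p2 P p3) (angle_le_pi p2 P p3) (sin_angle_pos h2)
  have b3 := angle_pos_lt_pi (angle_nonneg p1 P p3) (angle_le_pi p1 P p3) (sin_angle_pos h3)
  have hπ := Real.pi_pos
  have hk1 : (k : ℝ) < 1 := by nlinarith
  have hk2 : (-1 : ℝ) < k := by nlinarith
  have hk0 : k = 0 := by
    have : k < 1 := by exact_mod_cast hk1
    have : (-1 : ℤ) < k := by exact_mod_cast hk2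
    omega
  rw [hk0] at hk
  push_cast at hk
  linarith

lemma abs_oangle_sin {p1 p2 p3 : E2} (h1 : p1 ≠ p2) (h3 : p3 ≠ p2) :
    |(∡ p1 p2 p3).sin| = Real.sin (∠ p1 p2 p3) := by
  have h := EuclideanGeometry.angle_eq_abs_oangle_toReal h1 h3
  set t := (∡ p1 p2 p3).toReal with ht
  have hsin : (∡ p1 p2 p3).sin = Real.sin t := by
    conv_lhs => rw [← Real.Angle.coe_toReal (∡ p1 p2 p3)]
    rw [Real.Angle.sin_coe]
  rw [hsin, h]
  rcases le_or_gt 0 t with h0 | h0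
  · rw [abs_of_nonneg h0,
      abs_of_nonneg (Real.sin_nonneg_of_nonneg_of_le_pi h0 (Real.Angle.toReal_le_pi _))]
  · have hge : -π ≤ t := (Real.Angle.neg_pi_lt_toReal _).le
    rw [abs_of_neg h0, Real.sin_neg,
      abs_of_nonpos (Real.sin_nonpos_of_nonpos_of_neg_pi_le h0.le hge)]

lemma chord {A B C : E2} (h : AffineIndependent ℝ ![A, B, C]) (i₁ i₂ i₃ : Fin 3)
    (h12 : i₁ ≠ i₂) (h13 : i₁ ≠ i₃) (h23 : i₂ ≠ i₃)
    (hs : 0 < Real.sin (∠ (![A, B, C] i₁) (![A, B, C] i₂) (![A, B, C] i₃))) :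
    dist (![A, B, C] i₁) (![A, B, C] i₃)
      = 2 * circumRad h * Real.sin (∠ (![A, B, C] i₁) (![A, B, C] i₂) (![A, B, C] i₃)) := by
  have ht := Affine.Triangle.dist_div_sin_oangle_eq_two_mul_circumradius
    (⟨![A, B, C], h⟩ : Affine.Triangle ℝ E2) h12 h13 h23
  have hne1 : ![A, B, C] i₁ ≠ ![A, B, C] i₂ := h.injective.ne h12
  have hne3 : ![A, B, C] i₃ ≠ ![A, B, C] i₂ := h.injective.ne (Ne.symm h23)
  rw [show (⟨![A, B, C], h⟩ : Affine.Triangle ℝ E2).points = ![A, B, C] from rfl] at ht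
  rw [abs_oangle_sin hne1 hne3] at ht
  rw [div_eq_iff (ne_of_gt hs)] at ht
  rw [ht, circumRad]
  try ring

lemma cos_mul (P Q S : E2) :
    Real.cos (∠ Q P S) * (dist P Q * dist P S) = dp P Q S := by
  have h := InnerProductGeometry.cos_angle_mul_norm_mul_norm (Q - P) (S - P)
  have hd1 : dist P Q = ‖Q - P‖ := by rw [dist_comm, dist_eq_norm]
  have hd2 : dist P S = ‖S - P‖ := by rw [dist_comm, dist_eq_norm]
  have hang : ∠ Q P S = InnerProductGeometry.angle (Q - P) (S - P) := rfl
  rw [hang, hd1, hd2, h, inner_coords]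
  unfold dp
  norm_num [PiLp.sub_apply]

lemma sin_mul (P Q S : E2) (h : 0 ≤ cr P Q S) :
    Real.sin (∠ Q P S) * (dist P Q * dist P S) = cr P Q S := by
  have hf := InnerProductGeometry.sin_angle_mul_norm_mul_norm (Q - P) (S - P)
  have hd1 : dist P Q = ‖Q - P‖ := by rw [dist_comm, dist_eq_norm]
  have hd2 : dist P S = ‖S - P‖ := by rw [dist_comm, dist_eq_norm]
  have hang : ∠ Q P S = InnerProductGeometry.angle (Q - P) (S - P) := rfl
  have hrad : ⟪Q - P, Q - P⟫ * ⟪S - P, S - P⟫ - ⟪Q - P, S - P⟫ * ⟪Q - P, S - P⟫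
      = cr P Q S ^ 2 := by
    rw [inner_coords, inner_coords, inner_coords]
    unfold cr
    norm_num [PiLp.sub_apply]
    ring
  rw [hang, hd1, hd2, hf, hrad, Real.sqrt_sq_eq_abs, abs_of_nonneg h]

lemma cot_step (V W P Q : E2) (hV : 0 < cr V P Q) (hW : 0 < cr W P Q)
    (hK : 0 ≤ dp W P Q * cr V P Q - dp V P Q * cr W P Q) :
    0 ≤ Real.cos (∠ P W Q) * Real.sin (∠ P V Q)
      - Real.cos (∠ P V Q) * Real.sin (∠ P W Q) := by
  have c1 := cos_mul V P Q
  have c2 := cos_mul W P Q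
  have s1 := sin_mul V P Q hV.le
  have s2 := sin_mul W P Q hW.le
  have d1 : 0 < dist V P := dist_pos.mpr (Ne.symm (ne₁ hV))
  have d2 : 0 < dist V Q := dist_pos.mpr (Ne.symm (ne₂ hV))
  have d3 : 0 < dist W P := dist_pos.mpr (Ne.symm (ne₁ hW))
  have d4 : 0 < dist W Q := dist_pos.mpr (Ne.symm (ne₂ hW))
  have hm : 0 < (dist V P * dist V Q) * (dist W P * dist W Q) := by positivity
  have expand : (Real.cos (∠ P W Q) * Real.sin (∠ P V Q)
        - Real.cos (∠ P V Q) * Real.sin (∠ P W Q))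
        * ((dist V P * dist V Q) * (dist W P * dist W Q))
      = dp W P Q * cr V P Q - dp V P Q * cr W P Q := by
    calc (Real.cos (∠ P W Q) * Real.sin (∠ P V Q)
        - Real.cos (∠ P V Q) * Real.sin (∠ P W Q))
        * ((dist V P * dist V Q) * (dist W P * dist W Q))
        = (Real.cos (∠ P W Q) * (dist W P * dist W Q))
            * (Real.sin (∠ P V Q) * (dist V P * dist V Q))
          - (Real.cos (∠ P V Q) * (dist V P * dist V Q))
            * (Real.sin (∠ P W Q) * (dist W P * dist W Q)) := by ring
      _ = dp W P Q * cr V P Q - dp V P Q * cr W P Q := by rw [c1, c2, s1, s2]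
  nlinarith [hK, hm, expand]

lemma key {u u' : ℝ} (hu1 : 0 < u) (hu2 : u < π) (hu1' : 0 < u') (hu2' : u' < π)
    (hcot : 0 ≤ Real.cos u' * Real.sin u - Real.cos u * Real.sin u')
    (hsin : Real.sin u < Real.sin u') : π < u + u' := by
  by_contra hle
  push_neg at hle
  have hsu : 0 < Real.sin u := Real.sin_pos_of_pos_of_lt_pi hu1 hu2
  have hsu' : 0 < Real.sin u' := Real.sin_pos_of_pos_of_lt_pi hu1' hu2'
  have hcos : 0 ≤ Real.cos u + Real.cos u' := by
    have h1 : Real.cos (π - u') ≤ Real.cos u :=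
      Real.cos_le_cos_of_nonneg_of_le_pi hu1.le (by linarith) (by linarith)
    rw [Real.cos_pi_sub] at h1
    linarith
  have p1 := Real.sin_sq_add_cos_sq u
  have p2 := Real.sin_sq_add_cos_sq u'
  set s := Real.sin u
  set s' := Real.sin u'
  set c := Real.cos u
  set c' := Real.cos u'
  -- (c'*s)^2 - (c*s')^2 = s^2 - s'^2 < 0, yet c'*s - c*s' ≥ 0 so c'*s + c*s' < 0
  have hsq : (c' * s) ^ 2 - (c * s') ^ 2 = s ^ 2 - s' ^ 2 := by nlinarith
  have hA : c' * s + c * s' < 0 := by nlinarith [sq_nonneg (c' * s - c * s')]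
  have hc : c < 0 := by nlinarith
  have hc' : 0 < c' := by linarith
  nlinarith [hcos]

lemma sin_lt {d R R' s s' : ℝ} (h1 : d = 2 * R * s) (h2 : d = 2 * R' * s')
    (hR' : 0 < R') (hlt : R' < R) (hs : 0 < s) : s < s' := by
  nlinarith [mul_pos (sub_pos.mpr hlt) hs]

set_option maxHeartbeats 1000000 in
theorem main (A B C D : EuclideanSpace ℝ (Fin 2))
    (hconv : ccw A B C ∧ ccw B C D ∧ ccw C D A ∧ ccw D A B)
    (hABC : AffineIndependent ℝ ![A, B, C]) (hACD : AffineIndependent ℝ ![A, C, D])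
    (hABD : AffineIndependent ℝ ![A, B, D]) (hBCD : AffineIndependent ℝ ![B, C, D])
    (hDelaunay : dist D (circumCtr hABC) > circumRad hABC) :
    min (circumRad hABC) (circumRad hACD) ≤ min (circumRad hABD) (circumRad hBCD) ∧
      max (circumRad hABC) (circumRad hACD) ≤ max (circumRad hABD) (circumRad hBCD) := by
  obtain ⟨hc1, hc2, hc3, hc4⟩ := hconv
  have pABC : 0 < cr A B C := hc1
  have pBCD : 0 < cr B C D := hc2
  have pCDA : 0 < cr C D A := hc3
  have pDAB : 0 < cr D A B := hc4
  have pCAB : 0 < cr C A B := by rw [show cr C A B = cr A B C from by unfold cr; ring]; exact pABC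
  have pBCA : 0 < cr B C A := by rw [show cr B C A = cr A B C from by unfold cr; ring]; exact pABC
  have pCDB : 0 < cr C D B := by rw [show cr C D B = cr B C D from by unfold cr; ring]; exact pBCD
  have pDBC : 0 < cr D B C := by rw [show cr D B C = cr B C D from by unfold cr; ring]; exact pBCD
  have pDAC : 0 < cr D A C := by rw [show cr D A C = cr C D A from by unfold cr; ring]; exact pCDA
  have pACD : 0 < cr A C D := by rw [show cr A C D = cr C D A from by unfold cr; ring]; exact pCDA
  have pABD : 0 < cr A B D := by rw [show cr A B D = cr D A B from by unfold cr; ring]; exact pDAB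
  have pBDA : 0 < cr B D A := by rw [show cr B D A = cr D A B from by unfold cr; ring]; exact pDAB
  -- sines of the eight relevant angles are positive
  have sx : 0 < Real.sin (∠ A C B) := sin_angle_pos pCAB
  have sx' : 0 < Real.sin (∠ A D B) := sin_angle_pos pDAB
  have sy : 0 < Real.sin (∠ D C A) := sin_angle_pos pCDA
  have sy' : 0 < Real.sin (∠ D B A) := sin_angle_pos pBDA
  have sz : 0 < Real.sin (∠ B A C) := sin_angle_pos pABC
  have sz' : 0 < Real.sin (∠ B D C) := sin_angle_pos pDBC
  have sw : 0 < Real.sin (∠ C A D) := sin_angle_pos pACD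
  have sw' : 0 < Real.sin (∠ C B D) := sin_angle_pos pBCD
  -- angle bounds
  have bx := angle_pos_lt_pi (angle_nonneg A C B) (angle_le_pi A C B) sx
  have bx' := angle_pos_lt_pi (angle_nonneg A D B) (angle_le_pi A D B) sx'
  have by' := angle_pos_lt_pi (angle_nonneg D C A) (angle_le_pi D C A) sy
  have by'' := angle_pos_lt_pi (angle_nonneg D B A) (angle_le_pi D B A) sy'
  have bz := angle_pos_lt_pi (angle_nonneg B A C) (angle_le_pi B A C) sz
  have bz' := angle_pos_lt_pi (angle_nonneg B D C) (angle_le_pi B D C) sz'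
  have bw := angle_pos_lt_pi (angle_nonneg C A D) (angle_le_pi C A D) sw
  have bw' := angle_pos_lt_pi (angle_nonneg C B D) (angle_le_pi C B D) sw'
  -- law of sines: chord formulas
  have e1 : dist A B = 2 * circumRad hABC * Real.sin (∠ A C B) := by
    simpa using chord hABC 0 2 1 (by decide) (by decide) (by decide) (by simpa using sx)
  have e2 : dist B C = 2 * circumRad hABC * Real.sin (∠ B A C) := by
    simpa using chord hABC 1 0 2 (by decide) (by decide) (by decide) (by simpa using sz)
  have e3 : dist A D = 2 * circumRad hACD * Real.sin (∠ D C A) := by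
    rw [EuclideanGeometry.angle_comm D C A]
    simpa using chord hACD 0 1 2 (by decide) (by decide) (by decide)
      (by simpa [EuclideanGeometry.angle_comm A C D] using sy)
  have e4 : dist C D = 2 * circumRad hACD * Real.sin (∠ C A D) := by
    simpa using chord hACD 1 0 2 (by decide) (by decide) (by decide) (by simpa using sw)
  have e5 : dist A B = 2 * circumRad hABD * Real.sin (∠ A D B) := by
    simpa using chord hABD 0 2 1 (by decide) (by decide) (by decide) (by simpa using sx')
  have e6 : dist A D = 2 * circumRad hABD * Real.sin (∠ D B A) := by
    rw [EuclideanGeometry.angle_comm D B A]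
    simpa using chord hABD 0 1 2 (by decide) (by decide) (by decide)
      (by simpa [EuclideanGeometry.angle_comm A B D] using sy')
  have e7 : dist B C = 2 * circumRad hBCD * Real.sin (∠ B D C) := by
    simpa using chord hBCD 0 2 1 (by decide) (by decide) (by decide) (by simpa using sz')
  have e8 : dist C D = 2 * circumRad hBCD * Real.sin (∠ C B D) := by
    simpa using chord hBCD 1 0 2 (by decide) (by decide) (by decide) (by simpa using sw')
  -- angle additivity at the four vertices
  have sum1 : ∠ D C A + ∠ A C B = ∠ D C B := angle_add pCDA pCAB pCDB
  have sum3 : ∠ B A C + ∠ C A D = ∠ B A D := angle_add pABC pACD pABD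
  have sum6 : ∠ A D B + ∠ B D C = ∠ A D C := angle_add pDAB pDBC pDAC
  have sum8 : ∠ C B D + ∠ D B A = ∠ C B A := angle_add pBCD pBDA pBCA
  -- triangle angle sums
  have t1 : ∠ A D B + ∠ D B A + ∠ B A D = π :=
    EuclideanGeometry.angle_add_angle_add_angle_eq_pi B (Ne.symm (ne₁ pDAB))
  have t2 : ∠ B D C + ∠ D C B + ∠ C B D = π :=
    EuclideanGeometry.angle_add_angle_add_angle_eq_pi C (ne₁ pBDA)
  have t3 : ∠ A C B + ∠ C B A + ∠ B A C = π :=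
    EuclideanGeometry.angle_add_angle_add_angle_eq_pi B (Ne.symm (ne₁ pCAB))
  have t4 : ∠ D C A + ∠ C A D + ∠ A D C = π :=
    EuclideanGeometry.angle_add_angle_add_angle_eq_pi A (Ne.symm (ne₁ pCDA))
  -- power of the point D with respect to the circumcircle of ABC
  have hcc : dist A (circumCtr hABC) = circumRad hABC :=
    Affine.Simplex.dist_circumcenter_eq_circumradius
      (⟨![A, B, C], hABC⟩ : Affine.Triangle ℝ E2) 0
  have hccB : dist B (circumCtr hABC) = circumRad hABC :=
    Affine.Simplex.dist_circumcenter_eq_circumradius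
      (⟨![A, B, C], hABC⟩ : Affine.Triangle ℝ E2) 1
  have hccC : dist C (circumCtr hABC) = circumRad hABC :=
    Affine.Simplex.dist_circumcenter_eq_circumradius
      (⟨![A, B, C], hABC⟩ : Affine.Triangle ℝ E2) 2
  set O := circumCtr hABC with hOdef
  have heA : (A 0 - O 0) ^ 2 + (A 1 - O 1) ^ 2 = circumRad hABC ^ 2 := by
    rw [← dist_sq A O, hcc]
  have heB : (B 0 - O 0) ^ 2 + (B 1 - O 1) ^ 2 = circumRad hABC ^ 2 := by
    rw [← dist_sq B O, hccB]
  have heC : (C 0 - O 0) ^ 2 + (C 1 - O 1) ^ 2 = circumRad hABC ^ 2 := by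
    rw [← dist_sq C O, hccC]
  have hR0 : 0 ≤ circumRad hABC := by rw [← hcc]; exact dist_nonneg
  have hpD : circumRad hABC ^ 2 < (D 0 - O 0) ^ 2 + (D 1 - O 1) ^ 2 := by
    have h2 : circumRad hABC ^ 2 < dist D O ^ 2 := by
      have h3 := mul_self_lt_mul_self hR0 hDelaunay
      simpa [pow_two] using h3
    rw [← dist_sq D O]
    exact h2
  have hK1 : dp D A B * cr C A B - dp C A B * cr D A B
      = cr A B C * ((D 0 - O 0) ^ 2 + (D 1 - O 1) ^ 2 - circumRad hABC ^ 2) := by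
    unfold cr dp
    linear_combination (-((B 0 - D 0) * (C 1 - D 1) - (B 1 - D 1) * (C 0 - D 0))) * heA
      + ((A 0 - D 0) * (C 1 - D 1) - (A 1 - D 1) * (C 0 - D 0)) * heB
      + (-((A 0 - D 0) * (B 1 - D 1) - (A 1 - D 1) * (B 0 - D 0))) * heC
  have hK1pos : 0 ≤ dp D A B * cr C A B - dp C A B * cr D A B := by
    rw [hK1]
    have := sub_pos.mpr hpD
    positivity
  have hK2pos : 0 ≤ dp B D A * cr C D A - dp C D A * cr B D A := by
    rw [show dp B D A * cr C D A - dp C D A * cr B D A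
        = dp D A B * cr C A B - dp C A B * cr D A B from by unfold cr dp; ring]
    exact hK1pos
  have hK3pos : 0 ≤ dp D B C * cr A B C - dp A B C * cr D B C := by
    rw [show dp D B C * cr A B C - dp A B C * cr D B C
        = dp D A B * cr C A B - dp C A B * cr D A B from by unfold cr dp; ring]
    exact hK1pos
  have hK4pos : 0 ≤ dp B C D * cr A C D - dp A C D * cr B C D := by
    rw [show dp B C D * cr A C D - dp A C D * cr B C D
        = dp D A B * cr C A B - dp C A B * cr D A B from by unfold cr dp; ring]
    exact hK1pos
  -- cotangent comparisons
  have ct1 := cot_step C D A B pCAB pDAB hK1pos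
  have ct2 := cot_step C B D A pCDA pBDA hK2pos
  have ct3 := cot_step A D B C pABC pDBC hK3pos
  have ct4 := cot_step A B C D pACD pBCD hK4pos
  -- positivity of distances and radii
  have dAB : 0 < dist A B := dist_pos.mpr (ne₃ pCAB)
  have dAD : 0 < dist A D := dist_pos.mpr (Ne.symm (ne₃ pBDA))
  have dBC : 0 < dist B C := dist_pos.mpr (ne₃ pABC)
  have dCD : 0 < dist C D := dist_pos.mpr (ne₃ pACD)
  have R1pos : 0 < circumRad hABC :=
    Affine.Simplex.circumradius_pos (⟨![A, B, C], hABC⟩ : Affine.Triangle ℝ E2)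
  have R2pos : 0 < circumRad hACD :=
    Affine.Simplex.circumradius_pos (⟨![A, C, D], hACD⟩ : Affine.Triangle ℝ E2)
  have R3pos : 0 < circumRad hABD :=
    Affine.Simplex.circumradius_pos (⟨![A, B, D], hABD⟩ : Affine.Triangle ℝ E2)
  have R4pos : 0 < circumRad hBCD :=
    Affine.Simplex.circumradius_pos (⟨![B, C, D], hBCD⟩ : Affine.Triangle ℝ E2)
  -- the four key disjunctions
  have S1 : circumRad hABC ≤ circumRad hABD ∨ circumRad hACD ≤ circumRad hABD := by
    by_contra hS
    push_neg at hS
    obtain ⟨h13, h23⟩ := hS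
    have hs1 : Real.sin (∠ A C B) < Real.sin (∠ A D B) :=
      sin_lt e1 e5 R3pos h13 sx
    have k1 : π < ∠ A C B + ∠ A D B := key bx.1 bx.2 bx'.1 bx'.2 ct1 hs1
    have hs2 : Real.sin (∠ D C A) < Real.sin (∠ D B A) :=
      sin_lt e3 e6 R3pos h23 sy
    have k2 : π < ∠ D C A + ∠ D B A := key by'.1 by'.2 by''.1 by''.2 ct2 hs2
    have hle1 : ∠ D C A + ∠ A C B ≤ π := by rw [sum1]; exact angle_le_pi D C B
    have hle2 : ∠ A D B + ∠ D B A ≤ π := by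
      have := angle_nonneg B A D; linarith [t1]
    linarith
  have S2 : circumRad hABC ≤ circumRad hBCD ∨ circumRad hACD ≤ circumRad hBCD := by
    by_contra hS
    push_neg at hS
    obtain ⟨h14, h24⟩ := hS
    have hs3 : Real.sin (∠ B A C) < Real.sin (∠ B D C) :=
      sin_lt e2 e7 R4pos h14 sz
    have k3 : π < ∠ B A C + ∠ B D C := key bz.1 bz.2 bz'.1 bz'.2 ct3 hs3
    have hs4 : Real.sin (∠ C A D) < Real.sin (∠ C B D) :=
      sin_lt e4 e8 R4pos h24 sw
    have k4 : π < ∠ C A D + ∠ C B D := key bw.1 bw.2 bw'.1 bw'.2 ct4 hs4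
    have hle3 : ∠ B A C + ∠ C A D ≤ π := by rw [sum3]; exact angle_le_pi B A D
    have hle4 : ∠ B D C + ∠ C B D ≤ π := by
      have := angle_nonneg D C B; linarith [t2]
    linarith
  have S3 : circumRad hABC ≤ circumRad hABD ∨ circumRad hABC ≤ circumRad hBCD := by
    by_contra hS
    push_neg at hS
    obtain ⟨h13, h14⟩ := hS
    have hs1 : Real.sin (∠ A C B) < Real.sin (∠ A D B) :=
      sin_lt e1 e5 R3pos h13 sx
    have k1 : π < ∠ A C B + ∠ A D B := key bx.1 bx.2 bx'.1 bx'.2 ct1 hs1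
    have hs3 : Real.sin (∠ B A C) < Real.sin (∠ B D C) :=
      sin_lt e2 e7 R4pos h14 sz
    have k3 : π < ∠ B A C + ∠ B D C := key bz.1 bz.2 bz'.1 bz'.2 ct3 hs3
    have hle5 : ∠ A C B + ∠ B A C ≤ π := by
      have := angle_nonneg C B A; linarith [t3]
    have hle6 : ∠ A D B + ∠ B D C ≤ π := by rw [sum6]; exact angle_le_pi A D C
    linarith
  have S4 : circumRad hACD ≤ circumRad hABD ∨ circumRad hACD ≤ circumRad hBCD := by
    by_contra hS
    push_neg at hS
    obtain ⟨h23, h24⟩ := hS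
    have hs2 : Real.sin (∠ D C A) < Real.sin (∠ D B A) :=
      sin_lt e3 e6 R3pos h23 sy
    have k2 : π < ∠ D C A + ∠ D B A := key by'.1 by'.2 by''.1 by''.2 ct2 hs2
    have hs4 : Real.sin (∠ C A D) < Real.sin (∠ C B D) :=
      sin_lt e4 e8 R4pos h24 sw
    have k4 : π < ∠ C A D + ∠ C B D := key bw.1 bw.2 bw'.1 bw'.2 ct4 hs4
    have hle7 : ∠ D C A + ∠ C A D ≤ π := by
      have := angle_nonneg A D C; linarith [t4]
    have hle8 : ∠ C B D + ∠ D B A ≤ π := by rw [sum8]; exact angle_le_pi C B A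
    linarith
  constructor
  · refine le_min ?_ ?_
    · rcases S1 with h | h
      · exact le_trans (min_le_left _ _) h
      · exact le_trans (min_le_right _ _) h
    · rcases S2 with h | h
      · exact le_trans (min_le_left _ _) h
      · exact le_trans (min_le_right _ _) h
  · refine max_le ?_ ?_
    · rcases S3 with h | h
      · exact le_trans h (le_max_left _ _)
      · exact le_trans h (le_max_right _ _)
    · rcases S4 with h | h
      · exact le_trans h (le_max_left _ _)
      · exact le_trans h (le_max_right _ _)

end

end DelaunayAux

theorem delaunay_circumradii_min_max (A B C D : EuclideanSpace ℝ (Fin 2))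
    (hconv : ccw A B C ∧ ccw B C D ∧ ccw C D A ∧ ccw D A B)
    (hABC : AffineIndependent ℝ ![A, B, C]) (hACD : AffineIndependent ℝ ![A, C, D])
    (hABD : AffineIndependent ℝ ![A, B, D]) (hBCD : AffineIndependent ℝ ![B, C, D])
    (hDelaunay : dist D (circumCtr hABC) > circumRad hABC) :
    min (circumRad hABC) (circumRad hACD) ≤ min (circumRad hABD) (circumRad hBCD) ∧
      max (circumRad hABC) (circumRad hACD) ≤ max (circumRad hABD) (circumRad hBCD) := by
  exact DelaunayAux.main A B C D hconv hABC hACD hABD hBCD hDelaunay
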